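/- Let Γ be a simplicial complex with a free face E, contained in the unique facet F. Then the reduced simplicial homology of Γ over a field K is isomorphic to that of Γ∖E (all faces containing E removed) in all degrees i > dim E if E is itself a facet of Γ, and in all degrees i > 0 otherwise. -/

import Mathlib

namespace ChordalPaper

/-- A simplicial complex on vertex set `Fin n`: a family of finsets closed under subsets. -/
def IsComplex {n : ℕ} (Γ : Set (Finset (Fin n))) : Prop :=
  ∀ F ∈ Γ, ∀ F' ⊆ F, F' ∈ Γ

/-- The `d`-closure `Δ_d(Γ)`: all subsets of size `≤ d`, together with all subsets
all of whose `(d+1)`-element subsets are faces of `Γ`. -/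
def dClosure {n : ℕ} (d : ℕ) (Γ : Set (Finset (Fin n))) : Set (Finset (Fin n)) :=
  {F | F.card ≤ d ∨ ∀ G ⊆ F, G.card = d + 1 → G ∈ Γ}

/-- The pure `(d-1)`-skeleton `⟨[n]⟩^{[d-1]}` of the full simplex: all subsets of size `≤ d`. -/
def fullSkel (n d : ℕ) : Set (Finset (Fin n)) := {F | F.card ≤ d}

/-- A facet: a maximal face. -/
def IsFacet {n : ℕ} (Γ : Set (Finset (Fin n))) (F : Finset (Fin n)) : Prop :=
  F ∈ Γ ∧ ∀ G ∈ Γ, F ⊆ G → G = F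

/-- A free face: a face contained in a unique facet. -/
def IsFreeFace {n : ℕ} (Γ : Set (Finset (Fin n))) (E : Finset (Fin n)) : Prop :=
  E ∈ Γ ∧ ∃! F, IsFacet Γ F ∧ E ⊆ F

/-- Collapse at `E`: remove all faces containing `E` (including `E` itself). -/
def collapseFace {n : ℕ} (Γ : Set (Finset (Fin n))) (E : Finset (Fin n)) :
    Set (Finset (Fin n)) := {F ∈ Γ | ¬ E ⊆ F}

/-- Successive collapses along a list of faces. -/
def collapseList {n : ℕ} (Γ : Set (Finset (Fin n))) :
    List (Finset (Fin n)) → Set (Finset (Fin n))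
  | [] => Γ
  | E :: L => collapseList (collapseFace Γ E) L

/-- A free sequence: each face is free in the complex obtained by collapsing the previous ones. -/
def IsFreeSeq {n : ℕ} (Γ : Set (Finset (Fin n))) : List (Finset (Fin n)) → Prop
  | [] => True
  | E :: L => IsFreeFace Γ E ∧ IsFreeSeq (collapseFace Γ E) L

/-- `d`-collapsibility: a sequence of elementary `d`-collapsings (at free faces of
dimension `< d`, i.e. cardinality `≤ d`) reduces `Γ` to the void complex. -/
def Collapsible {n : ℕ} (d : ℕ) (Γ : Set (Finset (Fin n))) : Prop :=
  ∃ L : List (Finset (Fin n)),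
    IsFreeSeq Γ L ∧ (∀ E ∈ L, E.card ≤ d) ∧ collapseList Γ L = ∅

/-- Simplicial deletion `Γ∖E`: remove all faces strictly containing `E` (keeping `E`). -/
def srDel {n : ℕ} (Γ : Set (Finset (Fin n))) (E : Finset (Fin n)) :
    Set (Finset (Fin n)) := {F ∈ Γ | ¬ E ⊂ F}

/-- Successive simplicial deletions along a list of faces. -/
def srDelList {n : ℕ} (Γ : Set (Finset (Fin n))) :
    List (Finset (Fin n)) → Set (Finset (Fin n))
  | [] => Γ
  | E :: L => srDelList (srDel Γ E) L

/-- A simplicial order for a `d`-closure on `Fin n`: a sequence of non-facet free faces of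
cardinality `d` whose successive simplicial deletions reduce the complex to the pure
`(d-1)`-skeleton of the full simplex. -/
def IsSimpOrder {n : ℕ} (d : ℕ) (Γ : Set (Finset (Fin n))) :
    List (Finset (Fin n)) → Prop
  | [] => Γ = fullSkel n d
  | E :: L => E.card = d ∧ IsFreeFace Γ E ∧ ¬ IsFacet Γ E ∧ IsSimpOrder d (srDel Γ E) L

/-- `Γ` is `d`-chordal: its `d`-closure equals the pure `(d-1)`-skeleton of the full
simplex or admits a simplicial order. -/
def DChordal {n : ℕ} (d : ℕ) (Γ : Set (Finset (Fin n))) : Prop :=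
  ∃ L, IsSimpOrder d (dClosure d Γ) L

/-- A minimal nonface of `Γ`. -/
def IsMinNonface {n : ℕ} (Γ : Set (Finset (Fin n))) (F : Finset (Fin n)) : Prop :=
  F ∉ Γ ∧ ∀ G ⊂ F, G ∈ Γ

end ChordalPaper

namespace ChordalPaper

open scoped Classical

lemma collapseFace_isComplex {n : ℕ} {Γ : Set (Finset (Fin n))} (hΓ : IsComplex Γ)
    (E : Finset (Fin n)) : IsComplex (collapseFace Γ E) := by
  intro F hF F' hF'
  exact ⟨hΓ F hF.1 F' hF', fun h => hF.2 (h.trans hF')⟩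

/-- The simplicial boundary map of the (augmented) chain complex of `Γ` over `K`, from
chains on faces of cardinality `k + 1` to chains on faces of cardinality `k`, given by
the usual alternating sum, with signs coming from the linear order on `Fin n`:
`(∂ g) (G) = ∑_{v ∉ G, G ∪ {v} ∈ Γ} (-1)^{#{b ∈ G : b < v}} g (G ∪ {v})`.
(For `k = 0` this is the augmentation map to the span of the empty face, so the
resulting homology is the *reduced* homology.) -/
noncomputable def bdry {n : ℕ} (K : Type) [Field K] (Γ : Set (Finset (Fin n))) (k : ℕ) :
    ({F : Finset (Fin n) // F ∈ Γ ∧ F.card = k + 1} → K) →ₗ[K]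
      ({F : Finset (Fin n) // F ∈ Γ ∧ F.card = k} → K) :=
  LinearMap.pi fun G =>
    ∑ v : Fin n,
      if h : v ∉ G.1 ∧ insert v G.1 ∈ Γ then
        ((-1 : K) ^ ((G.1.filter (fun b => b < v)).card)) •
          LinearMap.proj (⟨insert v G.1,
            ⟨h.2, by rw [Finset.card_insert_of_notMem h.1, G.2.2]⟩⟩ :
            {F : Finset (Fin n) // F ∈ Γ ∧ F.card = k + 1})
      else 0

/-- The reduced simplicial homology of `Γ` over `K` in dimension `i`: cycles supported
on `i`-dimensional faces (cardinality `i + 1`) modulo boundaries of `(i+1)`-dimensional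
chains. -/
noncomputable def reducedHomology {n : ℕ} (K : Type) [Field K]
    (Γ : Set (Finset (Fin n))) (i : ℕ) : Type :=
  LinearMap.ker (bdry K Γ i) ⧸
    Submodule.comap (LinearMap.ker (bdry K Γ i)).subtype
      (LinearMap.range (bdry K Γ (i + 1)))

noncomputable instance {n : ℕ} (K : Type) [Field K] (Γ : Set (Finset (Fin n))) (i : ℕ) :
    AddCommGroup (reducedHomology K Γ i) :=
  inferInstanceAs (AddCommGroup (_ ⧸ _))

noncomputable instance {n : ℕ} (K : Type) [Field K] (Γ : Set (Finset (Fin n))) (i : ℕ) :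
    Module K (reducedHomology K Γ i) :=
  inferInstanceAs (Module K (_ ⧸ _))

end ChordalPaper


lemma homology_retract {K : Type} [Field K] {A₂ A₁ A₀ B₂ B₁ B₀ : Type}
    [AddCommGroup A₂] [AddCommGroup A₁] [AddCommGroup A₀]
    [AddCommGroup B₂] [AddCommGroup B₁] [AddCommGroup B₀]
    [Module K A₂] [Module K A₁] [Module K A₀]
    [Module K B₂] [Module K B₁] [Module K B₀]
    (a₂ : A₂ →ₗ[K] A₁) (a₁ : A₁ →ₗ[K] A₀) (b₂ : B₂ →ₗ[K] B₁) (b₁ : B₁ →ₗ[K] B₀)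
    (f₂ : A₂ →ₗ[K] B₂) (f₁ : A₁ →ₗ[K] B₁) (f₀ : A₀ →ₗ[K] B₀)
    (g₂ : B₂ →ₗ[K] A₂) (g₁ : B₁ →ₗ[K] A₁) (g₀ : B₀ →ₗ[K] A₀)
    (h₁ : B₁ →ₗ[K] B₂)
    (hf₂ : b₂ ∘ₗ f₂ = f₁ ∘ₗ a₂) (hf₁ : b₁ ∘ₗ f₁ = f₀ ∘ₗ a₁)
    (hg₂ : a₂ ∘ₗ g₂ = g₁ ∘ₗ b₂) (hg₁ : a₁ ∘ₗ g₁ = g₀ ∘ₗ b₁)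
    (hgf : ∀ x, g₁ (f₁ x) = x)
    (hfg : ∀ x, b₁ x = 0 → f₁ (g₁ x) = x - b₂ (h₁ x)) :
    Nonempty
      ((LinearMap.ker a₁ ⧸ Submodule.comap (LinearMap.ker a₁).subtype (LinearMap.range a₂)) ≃ₗ[K]
       (LinearMap.ker b₁ ⧸ Submodule.comap (LinearMap.ker b₁).subtype (LinearMap.range b₂))) := by
  have hfker : ∀ x ∈ LinearMap.ker a₁, f₁ x ∈ LinearMap.ker b₁ := by
    intro x hx
    have := congrArg (fun φ => φ x) hf₁
    simp only [LinearMap.comp_apply] at this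
    simp [LinearMap.mem_ker] at hx ⊢
    rw [this, hx, map_zero]
  have hgker : ∀ x ∈ LinearMap.ker b₁, g₁ x ∈ LinearMap.ker a₁ := by
    intro x hx
    have := congrArg (fun φ => φ x) hg₁
    simp only [LinearMap.comp_apply] at this
    simp [LinearMap.mem_ker] at hx ⊢
    rw [this, hx, map_zero]
  set pA := Submodule.comap (LinearMap.ker a₁).subtype (LinearMap.range a₂) with hpA
  set pB := Submodule.comap (LinearMap.ker b₁).subtype (LinearMap.range b₂) with hpB
  set F' : LinearMap.ker a₁ →ₗ[K] LinearMap.ker b₁ := f₁.restrict hfker with hF'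
  set G' : LinearMap.ker b₁ →ₗ[K] LinearMap.ker a₁ := g₁.restrict hgker with hG'
  have hFle : pA ≤ Submodule.comap F' pB := by
    rintro ⟨x, hx⟩ ⟨z, hz⟩
    refine ⟨f₂ z, ?_⟩
    have := congrArg (fun φ => φ z) hf₂
    simp only [LinearMap.comp_apply] at this
    simp only [LinearMap.restrict_apply, F']
    rw [this, hz]; rfl
  have hGle : pB ≤ Submodule.comap G' pA := by
    rintro ⟨x, hx⟩ ⟨z, hz⟩
    refine ⟨g₂ z, ?_⟩
    have := congrArg (fun φ => φ z) hg₂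
    simp only [LinearMap.comp_apply] at this
    simp only [LinearMap.restrict_apply, G']
    rw [this, hz]; rfl
  set Φ := pA.mapQ pB F' hFle with hΦ
  set Ψ := pB.mapQ pA G' hGle with hΨ
  refine ⟨LinearEquiv.ofLinear Φ Ψ ?_ ?_⟩
  · -- Φ ∘ Ψ = id on B-side
    apply Submodule.linearMap_qext
    ext x
    simp only [LinearMap.comp_apply, LinearMap.id_apply, Submodule.mkQ_apply, hΦ, hΨ,
      Submodule.mapQ_apply]
    rw [Submodule.Quotient.eq]
    have hx : b₁ x.1 = 0 := x.2
    have : (F' (G' x)).1 - x.1 = b₂ (-h₁ x.1) := by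
      simp only [LinearMap.restrict_apply, F', G', map_neg]
      rw [hfg x.1 hx]; abel
    exact ⟨-h₁ x.1, this.symm⟩
  · apply Submodule.linearMap_qext
    ext x
    simp only [LinearMap.comp_apply, LinearMap.id_apply, Submodule.mkQ_apply, hΦ, hΨ,
      Submodule.mapQ_apply]
    congr 1
    apply Subtype.ext
    simpa only [LinearMap.restrict_apply, F', G'] using hgf x.1

namespace ChordalPaper

open scoped Classical

section Machinery

variable {n : ℕ} (K : Type) [Field K] (Γ : Set (Finset (Fin n)))

/-- sign -/
noncomputable def sgn (S : Finset (Fin n)) (v : Fin n) : K :=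
  (-1 : K) ^ ((S.filter (fun b => b < v)).card)

lemma sgn_mul_self (S : Finset (Fin n)) (v : Fin n) : sgn K S v * sgn K S v = 1 := by
  rw [sgn, ← pow_add]
  exact Even.neg_one_pow ⟨_, rfl⟩

lemma sgn_insert {S : Finset (Fin n)} {v : Fin n} (hv : v ∉ S) (w : Fin n) :
    sgn K (insert v S) w = (if v < w then -1 else 1) * sgn K S w := by
  rw [sgn, sgn, Finset.filter_insert]
  split
  · rw [Finset.card_insert_of_notMem (fun hc => hv (Finset.mem_of_mem_filter _ hc)), pow_succ]
    ring
  · rw [one_mul]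

lemma sgn_skew {S : Finset (Fin n)} {v w : Fin n} (hv : v ∉ S) (hw : w ∉ S) (hvw : v ≠ w) :
    sgn K S v * sgn K (insert v S) w = -(sgn K S w * sgn K (insert w S) v) := by
  rw [sgn_insert K hv, sgn_insert K hw]
  rcases hvw.lt_or_gt with h | h
  · rw [if_pos h, if_neg (asymm h)]; ring
  · rw [if_neg (asymm h), if_pos h]; ring

/-- extension of a chain by zero to all finsets -/
noncomputable def ex (k : ℕ) (x : {F : Finset (Fin n) // F ∈ Γ ∧ F.card = k} → K)
    (S : Finset (Fin n)) : K :=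
  if h : S ∈ Γ ∧ S.card = k then x ⟨S, h⟩ else 0

lemma ex_coe {k : ℕ} (x : {F : Finset (Fin n) // F ∈ Γ ∧ F.card = k} → K)
    (G : {F : Finset (Fin n) // F ∈ Γ ∧ F.card = k}) : ex K Γ k x G.1 = x G := by
  rw [ex, dif_pos G.2]

lemma ex_of_not_mem {k : ℕ} {S : Finset (Fin n)} (hS : S ∉ Γ)
    (x : {F : Finset (Fin n) // F ∈ Γ ∧ F.card = k} → K) : ex K Γ k x S = 0 :=
  dif_neg (fun h => hS h.1)

lemma ex_of_card {k : ℕ} {S : Finset (Fin n)} (hS : S.card ≠ k)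
    (x : {F : Finset (Fin n) // F ∈ Γ ∧ F.card = k} → K) : ex K Γ k x S = 0 :=
  dif_neg (fun h => hS h.2)

lemma ex_of_not_mem' {k : ℕ} {S : Finset (Fin n)} (hS : ¬(S ∈ Γ ∧ S.card = k))
    (x : {F : Finset (Fin n) // F ∈ Γ ∧ F.card = k} → K) : ex K Γ k x S = 0 :=
  dif_neg hS

lemma ex_sub {k : ℕ} (x y : {F : Finset (Fin n) // F ∈ Γ ∧ F.card = k} → K)
    (S : Finset (Fin n)) : ex K Γ k (x - y) S = ex K Γ k x S - ex K Γ k y S := by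
  rw [ex, ex, ex]
  split
  · rfl
  · rw [sub_zero]

lemma bdry_apply (k : ℕ) (x : {F : Finset (Fin n) // F ∈ Γ ∧ F.card = k + 1} → K)
    (G : {F : Finset (Fin n) // F ∈ Γ ∧ F.card = k}) :
    bdry K Γ k x G = ∑ v : Fin n, sgn K G.1 v * ex K Γ (k+1) x (insert v G.1) := by
  rw [bdry, LinearMap.pi_apply, LinearMap.sum_apply]
  refine Finset.sum_congr rfl fun v _ => ?_
  by_cases h : v ∉ G.1 ∧ insert v G.1 ∈ Γ
  · rw [dif_pos h]
    have hc : (insert v G.1).card = k + 1 := by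
      rw [Finset.card_insert_of_notMem h.1, G.2.2]
    rw [LinearMap.smul_apply, LinearMap.proj_apply, smul_eq_mul, sgn,
      ex, dif_pos ⟨h.2, hc⟩]
  · rw [dif_neg h, LinearMap.zero_apply]
    rcases not_and_or.mp h with h1 | h2
    · have hv : v ∈ G.1 := not_not.mp h1
      rw [ex_of_card K Γ (by rw [Finset.insert_eq_self.mpr hv, G.2.2]; omega), mul_zero]
    · rw [ex_of_not_mem K Γ h2, mul_zero]

lemma ex_bdry {k : ℕ} {S : Finset (Fin n)} (hS : S ∈ Γ) (hc : S.card = k)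
    (x : {F : Finset (Fin n) // F ∈ Γ ∧ F.card = k + 1} → K) :
    ex K Γ k (bdry K Γ k x) S = ∑ v : Fin n, sgn K S v * ex K Γ (k+1) x (insert v S) := by
  rw [ex, dif_pos ⟨hS, hc⟩, bdry_apply]

end Machinery

end ChordalPaper

namespace ChordalPaper

open scoped Classical

section Machinery2

variable {n : ℕ} (K : Type) [Field K] {Γ : Set (Finset (Fin n))}

/-- d² = 0 -/
lemma bdry_bdry (hΓ : IsComplex Γ) (k : ℕ)
    (x : {F : Finset (Fin n) // F ∈ Γ ∧ F.card = k + 2} → K)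
    (G : {F : Finset (Fin n) // F ∈ Γ ∧ F.card = k}) :
    bdry K Γ k (bdry K Γ (k+1) x) G = 0 := by
  rw [bdry_apply]
  have hterm : ∀ v : Fin n, sgn K G.1 v * ex K Γ (k+1) (bdry K Γ (k+1) x) (insert v G.1)
      = ∑ w : Fin n, sgn K G.1 v * (sgn K (insert v G.1) w *
          ex K Γ (k+2) x (insert w (insert v G.1))) := by
    intro v
    by_cases h : v ∉ G.1 ∧ insert v G.1 ∈ Γ
    · rw [ex_bdry K Γ h.2 (by rw [Finset.card_insert_of_notMem h.1, G.2.2]), Finset.mul_sum]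
    · have h0 : ex K Γ (k+1) (bdry K Γ (k+1) x) (insert v G.1) = 0 := by
        rcases not_and_or.mp h with h1 | h2
        · exact ex_of_card K Γ (by rw [Finset.insert_eq_self.mpr (not_not.mp h1), G.2.2]; omega) _
        · exact ex_of_not_mem K Γ h2 _
      rw [h0, mul_zero]
      symm
      refine Finset.sum_eq_zero fun w _ => ?_
      rcases not_and_or.mp h with h1 | h2
      · have hv : v ∈ G.1 := not_not.mp h1
        have : insert w (insert v G.1) = insert w G.1 := by
          rw [Finset.insert_eq_self.mpr hv]
        rw [this]
        by_cases hw : w ∈ G.1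
        · rw [ex_of_card K Γ (by rw [Finset.insert_eq_self.mpr hw, G.2.2]; omega) x]; ring
        · rw [ex_of_card K Γ (by rw [Finset.card_insert_of_notMem hw, G.2.2]; omega) x]; ring
      · have : insert w (insert v G.1) ∉ Γ := fun hc =>
          h2 (hΓ _ hc _ (Finset.subset_insert _ _))
        rw [ex_of_not_mem K Γ this x]; ring
  rw [Finset.sum_congr rfl fun v _ => hterm v, ← Finset.sum_product']
  have hdiag : ∀ v w : Fin n, v = w →
      sgn K G.1 v * (sgn K (insert v G.1) w * ex K Γ (k + 2) x (insert w (insert v G.1))) = 0 := by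
    intro v w hvw
    subst hvw
    have : ex K Γ (k+2) x (insert v (insert v G.1)) = 0 := by
      refine ex_of_card K Γ ?_ x
      rw [Finset.insert_idem]
      by_cases hv : v ∈ G.1
      · rw [Finset.insert_eq_self.mpr hv, G.2.2]; omega
      · rw [Finset.card_insert_of_notMem hv, G.2.2]; omega
    rw [this]; ring
  refine Finset.sum_ninvolution Prod.swap ?_
    (fun a ha hsw => ha (hdiag a.1 a.2 (by
      have := congrArg Prod.snd hsw
      simpa using this)))
    (fun _ => Finset.mem_univ _) (fun _ => rfl)
  rintro ⟨v, w⟩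
  simp only [Prod.swap]
  by_cases hvw : v = w
  · rw [hdiag v w hvw, hdiag w v hvw.symm, add_zero]
  · by_cases hm : v ∉ G.1 ∧ w ∉ G.1 ∧ insert w (insert v G.1) ∈ Γ
    · obtain ⟨hv, hw, hmem⟩ := hm
      have hcomm : insert w (insert v G.1) = insert v (insert w G.1) := Finset.insert_comm _ _ _
      rw [hcomm]
      rw [← mul_assoc, ← mul_assoc, sgn_skew K hv hw hvw]
      ring
    · -- both ex terms vanish
      have key : ∀ a b : Fin n, a ≠ b → ¬(a ∉ G.1 ∧ b ∉ G.1 ∧ insert b (insert a G.1) ∈ Γ) →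
          ex K Γ (k+2) x (insert b (insert a G.1)) = 0 := by
        intro a b hab hm
        by_cases ha : a ∈ G.1
        · refine ex_of_card K Γ ?_ x
          rw [Finset.insert_eq_self.mpr ha]
          by_cases hb : b ∈ G.1
          · rw [Finset.insert_eq_self.mpr hb, G.2.2]; omega
          · rw [Finset.card_insert_of_notMem hb, G.2.2]; omega
        by_cases hb : b ∈ G.1
        · refine ex_of_card K Γ ?_ x
          have : b ∈ insert a G.1 := Finset.mem_insert_of_mem hb
          rw [Finset.insert_eq_self.mpr this, Finset.card_insert_of_notMem ha, G.2.2]; omega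
        · have : insert b (insert a G.1) ∉ Γ := fun hc => hm ⟨ha, hb, hc⟩
          exact ex_of_not_mem K Γ this x
      have hm' : ¬(w ∉ G.1 ∧ v ∉ G.1 ∧ insert v (insert w G.1) ∈ Γ) := by
        rw [Finset.insert_comm]
        tauto
      rw [key v w hvw hm, key w v (Ne.symm hvw) hm']
      ring

end Machinery2

end ChordalPaper

section Machinery3

namespace ChordalPaper

open scoped Classical

variable {n : ℕ} (K : Type) [Field K] (Γ : Set (Finset (Fin n))) (E : Finset (Fin n))

/-- extension by zero from the collapse to `Γ` -/
noncomputable def extMap (k : ℕ) :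
    ({F : Finset (Fin n) // F ∈ collapseFace Γ E ∧ F.card = k} → K) →ₗ[K]
      ({F : Finset (Fin n) // F ∈ Γ ∧ F.card = k} → K) :=
  LinearMap.pi fun G =>
    if h : E ⊆ G.1 then 0
    else LinearMap.proj
      (⟨G.1, ⟨G.2.1, h⟩, G.2.2⟩ : {F : Finset (Fin n) // F ∈ collapseFace Γ E ∧ F.card = k})

/-- restriction from `Γ` to the collapse -/
noncomputable def resMap (k : ℕ) :
    ({F : Finset (Fin n) // F ∈ Γ ∧ F.card = k} → K) →ₗ[K]
      ({F : Finset (Fin n) // F ∈ collapseFace Γ E ∧ F.card = k} → K) :=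
  LinearMap.pi fun G =>
    LinearMap.proj (⟨G.1, G.2.1.1, G.2.2⟩ : {F : Finset (Fin n) // F ∈ Γ ∧ F.card = k})

lemma ext_apply (k : ℕ) (x : {F : Finset (Fin n) // F ∈ collapseFace Γ E ∧ F.card = k} → K)
    (G : {F : Finset (Fin n) // F ∈ Γ ∧ F.card = k}) :
    extMap K Γ E k x G = if E ⊆ G.1 then 0 else ex K (collapseFace Γ E) k x G.1 := by
  rw [extMap, LinearMap.pi_apply]
  by_cases h : E ⊆ G.1
  · rw [dif_pos h, if_pos h, LinearMap.zero_apply]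
  · rw [dif_neg h, if_neg h, LinearMap.proj_apply, ex, dif_pos ⟨⟨G.2.1, h⟩, G.2.2⟩]

lemma res_apply (k : ℕ) (x : {F : Finset (Fin n) // F ∈ Γ ∧ F.card = k} → K)
    (G : {F : Finset (Fin n) // F ∈ collapseFace Γ E ∧ F.card = k}) :
    resMap K Γ E k x G = ex K Γ k x G.1 := by
  rw [resMap, LinearMap.pi_apply, LinearMap.proj_apply, ex, dif_pos ⟨G.2.1.1, G.2.2⟩]

lemma ex_ext (k : ℕ) (x : {F : Finset (Fin n) // F ∈ collapseFace Γ E ∧ F.card = k} → K)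
    (S : Finset (Fin n)) :
    ex K Γ k (extMap K Γ E k x) S =
      if E ⊆ S then 0 else ex K (collapseFace Γ E) k x S := by
  by_cases h : S ∈ Γ ∧ S.card = k
  · rw [ex, dif_pos h, ext_apply]
  · rw [ex_of_not_mem' K Γ h,
      ex_of_not_mem' K (collapseFace Γ E) (fun hc => h ⟨hc.1.1, hc.2⟩) x]
    split <;> rfl

lemma ex_res (k : ℕ) (x : {F : Finset (Fin n) // F ∈ Γ ∧ F.card = k} → K) (S : Finset (Fin n)) :
    ex K (collapseFace Γ E) k (resMap K Γ E k x) S =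
      if E ⊆ S then 0 else ex K Γ k x S := by
  by_cases h : S ∈ collapseFace Γ E ∧ S.card = k
  · rw [ex, dif_pos h, res_apply, if_neg h.1.2]
  · rw [ex, dif_neg h]
    split
    · rfl
    · rw [ex, dif_neg (fun hc : S ∈ Γ ∧ S.card = k => h ⟨⟨hc.1, ‹¬E ⊆ S›⟩, hc.2⟩)]

end ChordalPaper

end Machinery3

section Machinery4

namespace ChordalPaper

open scoped Classical

variable {n : ℕ} (K : Type) [Field K] (Γ : Set (Finset (Fin n)))
variable (E : Finset (Fin n)) (v₀ : Fin n)

/-- the cone (contracting homotopy) operator -/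
noncomputable def coneMap (hΓ : IsComplex Γ) (k : ℕ) :
    ({F : Finset (Fin n) // F ∈ Γ ∧ F.card = k} → K) →ₗ[K]
      ({F : Finset (Fin n) // F ∈ Γ ∧ F.card = k + 1} → K) :=
  LinearMap.pi fun H =>
    if h : v₀ ∈ H.1 ∧ E ⊆ H.1.erase v₀ then
      (sgn K (H.1.erase v₀) v₀) • LinearMap.proj
        (⟨H.1.erase v₀, ⟨hΓ H.1 H.2.1 _ (Finset.erase_subset _ _),
          by rw [Finset.card_erase_of_mem h.1, H.2.2]; omega⟩⟩ :
          {F : Finset (Fin n) // F ∈ Γ ∧ F.card = k})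
    else 0

lemma cone_apply (hΓ : IsComplex Γ) (k : ℕ)
    (x : {F : Finset (Fin n) // F ∈ Γ ∧ F.card = k} → K)
    (H : {F : Finset (Fin n) // F ∈ Γ ∧ F.card = k + 1}) :
    coneMap K Γ E v₀ hΓ k x H =
      if v₀ ∈ H.1 ∧ E ⊆ H.1.erase v₀ then
        sgn K (H.1.erase v₀) v₀ * ex K Γ k x (H.1.erase v₀)
      else 0 := by
  rw [coneMap, LinearMap.pi_apply]
  by_cases h : v₀ ∈ H.1 ∧ E ⊆ H.1.erase v₀
  · rw [dif_pos h, if_pos h, LinearMap.smul_apply, LinearMap.proj_apply, smul_eq_mul,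
      ex, dif_pos ⟨hΓ H.1 H.2.1 _ (Finset.erase_subset _ _),
        by rw [Finset.card_erase_of_mem h.1, H.2.2]; omega⟩]
  · rw [dif_neg h, if_neg h, LinearMap.zero_apply]

lemma ex_cone (hΓ : IsComplex Γ) (k : ℕ)
    (x : {F : Finset (Fin n) // F ∈ Γ ∧ F.card = k} → K)
    {S : Finset (Fin n)} (hS : S ∈ Γ) :
    ex K Γ (k+1) (coneMap K Γ E v₀ hΓ k x) S =
      if v₀ ∈ S ∧ E ⊆ S.erase v₀ then
        sgn K (S.erase v₀) v₀ * ex K Γ k x (S.erase v₀)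
      else 0 := by
  by_cases hc : S.card = k + 1
  · rw [ex, dif_pos ⟨hS, hc⟩, cone_apply]
  · rw [ex_of_card K Γ hc]
    split
    · rename_i hcond
      rw [ex_of_card K Γ (by
        rw [Finset.card_erase_of_mem hcond.1]
        have h1 : 1 ≤ S.card := Finset.card_pos.mpr ⟨v₀, hcond.1⟩
        omega) x, mul_zero]
    · rfl

variable {Γ E v₀}

/-- C2: extension by zero is a chain map. -/
lemma bdry_ext (k : ℕ)
    (x : {F : Finset (Fin n) // F ∈ collapseFace Γ E ∧ F.card = k + 1} → K)
    (G : {F : Finset (Fin n) // F ∈ Γ ∧ F.card = k}) :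
    bdry K Γ k (extMap K Γ E (k+1) x) G
      = extMap K Γ E k (bdry K (collapseFace Γ E) k x) G := by
  rw [bdry_apply, ext_apply]
  by_cases hG : E ⊆ G.1
  · rw [if_pos hG]
    refine Finset.sum_eq_zero fun v _ => ?_
    rw [ex_ext, if_pos (hG.trans (Finset.subset_insert _ _)), mul_zero]
  · rw [if_neg hG, ex_bdry K (collapseFace Γ E) ⟨G.2.1, hG⟩ G.2.2]
    refine Finset.sum_congr rfl fun v _ => ?_
    rw [ex_ext]
    split
    · rw [ex_of_not_mem' K (collapseFace Γ E) (fun hc => hc.1.2 ‹E ⊆ insert v G.1›) x,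
        mul_zero]
    · rfl

/-- C3: restriction commutes with the boundary on chains vanishing on faces containing `E`. -/
lemma bdry_res (k : ℕ) (x : {F : Finset (Fin n) // F ∈ Γ ∧ F.card = k + 1} → K)
    (hx : ∀ S : Finset (Fin n), E ⊆ S → ex K Γ (k+1) x S = 0)
    (G : {F : Finset (Fin n) // F ∈ collapseFace Γ E ∧ F.card = k}) :
    bdry K (collapseFace Γ E) k (resMap K Γ E (k+1) x) G
      = resMap K Γ E k (bdry K Γ k x) G := by
  rw [bdry_apply, res_apply, ex_bdry K Γ G.2.1.1 G.2.2]
  refine Finset.sum_congr rfl fun v _ => ?_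
  rw [ex_res]
  split
  · rw [hx _ ‹E ⊆ insert v G.1›, mul_zero]
  · rfl

lemma res_ext (k : ℕ)
    (x : {F : Finset (Fin n) // F ∈ collapseFace Γ E ∧ F.card = k} → K) :
    resMap K Γ E k (extMap K Γ E k x) = x := by
  funext G
  rw [res_apply, ex_ext, if_neg G.2.1.2, ex_coe]

/-- C6: extension of restriction is the identity on chains vanishing on faces containing `E`. -/
lemma ext_res (k : ℕ) (x : {F : Finset (Fin n) // F ∈ Γ ∧ F.card = k} → K)
    (hx : ∀ S : Finset (Fin n), E ⊆ S → ex K Γ k x S = 0) :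
    extMap K Γ E k (resMap K Γ E k x) = x := by
  funext G
  rw [ext_apply]
  split
  · rw [← ex_coe K Γ x G, hx _ ‹E ⊆ G.1›]
  · rw [ex_res, if_neg ‹¬E ⊆ G.1›, ex_coe]

lemma cone_ext (hΓ : IsComplex Γ) (k : ℕ)
    (x : {F : Finset (Fin n) // F ∈ collapseFace Γ E ∧ F.card = k} → K) :
    coneMap K Γ E v₀ hΓ k (extMap K Γ E k x) = 0 := by
  funext H
  rw [cone_apply, Pi.zero_apply]
  split
  · rw [ex_ext, if_pos ‹v₀ ∈ H.1 ∧ E ⊆ H.1.erase v₀›.2, mul_zero]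
  · rfl

lemma res_cone (hΓ : IsComplex Γ) (k : ℕ)
    (x : {F : Finset (Fin n) // F ∈ Γ ∧ F.card = k} → K) :
    resMap K Γ E (k+1) (coneMap K Γ E v₀ hΓ k x) = 0 := by
  funext G
  rw [res_apply, Pi.zero_apply, ex, dif_pos ⟨G.2.1.1, G.2.2⟩, cone_apply]
  rw [if_neg]
  rintro ⟨h1, h2⟩
  exact G.2.1.2 (h2.trans (Finset.erase_subset _ _))

end ChordalPaper

end Machinery4

section Machinery5

namespace ChordalPaper

open scoped Classical

variable {n : ℕ} (K : Type) [Field K] {Γ : Set (Finset (Fin n))}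
variable {E : Finset (Fin n)} {v₀ : Fin n}

/-- C4: the cone identity `∂h + h∂ = id` on coordinates containing `E`. -/
lemma cone_identity (hΓ : IsComplex Γ) {F : Finset (Fin n)} (hFΓ : F ∈ Γ)
    (hsub : ∀ S ∈ Γ, E ⊆ S → S ⊆ F) (hv₀F : v₀ ∈ F) (hv₀E : v₀ ∉ E) (k : ℕ)
    (x : {G : Finset (Fin n) // G ∈ Γ ∧ G.card = k + 1} → K)
    (S : Finset (Fin n)) (hES : E ⊆ S) :
    ex K Γ (k+1) (bdry K Γ (k+1) (coneMap K Γ E v₀ hΓ (k+1) x)) S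
      + ex K Γ (k+1) (coneMap K Γ E v₀ hΓ k (bdry K Γ k x)) S
    = ex K Γ (k+1) x S := by
  by_cases hSm : S ∈ Γ ∧ S.card = k + 1
  case neg =>
    rw [ex_of_not_mem' K Γ hSm, ex_of_not_mem' K Γ hSm, ex_of_not_mem' K Γ hSm, add_zero]
  obtain ⟨hSΓ, hcard⟩ := hSm
  have hSF : S ⊆ F := hsub S hSΓ hES
  rw [ex_bdry K Γ hSΓ hcard]
  by_cases hv₀S : v₀ ∈ S
  case neg =>
    -- case v₀ ∉ S
    have hterm2 : ex K Γ (k+1) (coneMap K Γ E v₀ hΓ k (bdry K Γ k x)) S = 0 := by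
      rw [ex_cone K Γ E v₀ hΓ k _ hSΓ, if_neg (fun hc => hv₀S hc.1)]
    rw [hterm2, add_zero]
    rw [Finset.sum_eq_single v₀]
    · have hins : insert v₀ S ∈ Γ :=
        hΓ F hFΓ _ (Finset.insert_subset hv₀F hSF)
      rw [ex_cone K Γ E v₀ hΓ (k+1) x hins, if_pos
          ⟨Finset.mem_insert_self _ _, by rw [Finset.erase_insert hv₀S]; exact hES⟩,
        Finset.erase_insert hv₀S, ← mul_assoc, sgn_mul_self, one_mul]
    · intro v _ hv
      by_cases hmem : insert v S ∈ Γ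
      · rw [ex_cone K Γ E v₀ hΓ (k+1) x hmem, if_neg, mul_zero]
        rintro ⟨h1, -⟩
        rcases Finset.mem_insert.mp h1 with h | h
        · exact hv h.symm
        · exact hv₀S h
      · rw [ex_of_not_mem K Γ hmem, mul_zero]
    · intro h
      exact absurd (Finset.mem_univ v₀) h
  case pos =>
    -- case v₀ ∈ S
    set T₀ := S.erase v₀ with hT₀
    have hv₀T₀ : v₀ ∉ T₀ := Finset.notMem_erase _ _
    have hET₀ : E ⊆ T₀ := Finset.subset_erase.mpr ⟨hES, fun hc => hv₀E hc⟩
    have hT₀Γ : T₀ ∈ Γ := hΓ S hSΓ _ (Finset.erase_subset _ _)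
    have hT₀card : T₀.card = k := by
      rw [hT₀, Finset.card_erase_of_mem hv₀S, hcard]; omega
    have hterm2 : ex K Γ (k+1) (coneMap K Γ E v₀ hΓ k (bdry K Γ k x)) S
        = ∑ w : Fin n, sgn K T₀ v₀ * (sgn K T₀ w * ex K Γ (k+1) x (insert w T₀)) := by
      rw [ex_cone K Γ E v₀ hΓ k _ hSΓ, if_pos ⟨hv₀S, hET₀⟩,
        ex_bdry K Γ hT₀Γ hT₀card, Finset.mul_sum]
    rw [hterm2]
    have hgv₀ : sgn K T₀ v₀ * (sgn K T₀ v₀ * ex K Γ (k+1) x (insert v₀ T₀))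
        = ex K Γ (k+1) x S := by
      rw [← mul_assoc, sgn_mul_self, one_mul, hT₀, Finset.insert_erase hv₀S]
    have hsplit : ∑ w : Fin n, sgn K T₀ v₀ * (sgn K T₀ w * ex K Γ (k+1) x (insert w T₀))
        = ex K Γ (k+1) x S + ∑ w ∈ Finset.univ.erase v₀,
            sgn K T₀ v₀ * (sgn K T₀ w * ex K Γ (k+1) x (insert w T₀)) := by
      rw [← Finset.add_sum_erase Finset.univ _ (Finset.mem_univ v₀), hgv₀]
    rw [hsplit]
    have htv₀ : sgn K S v₀ * ex K Γ (k+1+1) (coneMap K Γ E v₀ hΓ (k+1) x) (insert v₀ S) = 0 := by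
      rw [Finset.insert_eq_self.mpr hv₀S,
        ex_of_card K Γ (by rw [hcard]; omega), mul_zero]
    rw [← Finset.sum_erase (f := fun v : Fin n => sgn K S v *
      ex K Γ (k+1+1) (coneMap K Γ E v₀ hΓ (k+1) x) (insert v S)) Finset.univ htv₀]
    have hmatch : ∀ v ∈ Finset.univ.erase v₀,
        sgn K S v * ex K Γ (k+1+1) (coneMap K Γ E v₀ hΓ (k+1) x) (insert v S)
          = -(sgn K T₀ v₀ * (sgn K T₀ v * ex K Γ (k+1) x (insert v T₀))) := by
      intro v hv
      have hvv₀ : v ≠ v₀ := Finset.ne_of_mem_erase hv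
      by_cases hvS : v ∈ S
      · have h1 : insert v S = S := Finset.insert_eq_self.mpr hvS
        have h2 : insert v T₀ = T₀ :=
          Finset.insert_eq_self.mpr (Finset.mem_erase.mpr ⟨hvv₀, hvS⟩)
        rw [h1, h2, ex_of_card K Γ (by rw [hcard]; omega),
          ex_of_card K Γ (by rw [hT₀card]; omega), mul_zero, mul_zero, mul_zero, neg_zero]
      · have hvT₀ : v ∉ T₀ := fun hc => hvS (Finset.mem_of_mem_erase hc)
        have hkey : (insert v S).erase v₀ = insert v T₀ :=
          Finset.erase_insert_of_ne hvv₀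
        by_cases hmem : insert v S ∈ Γ
        · rw [ex_cone K Γ E v₀ hΓ (k+1) x hmem, if_pos
            ⟨Finset.mem_insert_of_mem hv₀S,
              by rw [hkey]; exact hET₀.trans (Finset.subset_insert _ _)⟩, hkey]
          have h1 : sgn K S v = (if v₀ < v then (-1:K) else 1) * sgn K T₀ v := by
            conv_lhs => rw [← Finset.insert_erase hv₀S]
            exact sgn_insert K hv₀T₀ v
          have h2 : sgn K (insert v T₀) v₀ = (if v < v₀ then (-1:K) else 1) * sgn K T₀ v₀ :=
            sgn_insert K hvT₀ v₀
          rw [h1, h2]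
          rcases hvv₀.lt_or_gt with h | h
          · rw [if_pos h, if_neg (asymm h)]; ring
          · rw [if_neg (asymm h), if_pos h]; ring
        · have hBig : insert v T₀ ∉ Γ := by
            intro hc
            have hvF : v ∈ F :=
              (hsub _ hc (hET₀.trans (Finset.subset_insert _ _))) (Finset.mem_insert_self _ _)
            exact hmem (hΓ F hFΓ _ (Finset.insert_subset hvF hSF))
          rw [ex_of_not_mem K Γ hmem, ex_of_not_mem K Γ hBig, mul_zero, mul_zero, mul_zero,
            neg_zero]

    rw [Finset.sum_congr rfl hmatch, Finset.sum_neg_distrib]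
    ring

end ChordalPaper

end Machinery5

section Final

namespace ChordalPaper

open scoped Classical

variable {n : ℕ}

lemma subset_facet {Γ : Set (Finset (Fin n))} {E Fc : Finset (Fin n)}
    (_hfac : IsFacet Γ Fc) (huniq : ∀ G, IsFacet Γ G ∧ E ⊆ G → G = Fc) :
    ∀ S ∈ Γ, E ⊆ S → S ⊆ Fc := by
  intro S hS hES
  have hfin : ({H | H ∈ Γ ∧ S ⊆ H} : Set (Finset (Fin n))).Finite := Set.toFinite _
  obtain ⟨H, ⟨hHΓ, hSH⟩, hmax⟩ :=
    hfin.exists_maximalFor Finset.card _ ⟨S, hS, subset_rfl⟩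
  have hHfac : IsFacet Γ H := by
    refine ⟨hHΓ, fun G hG hHG => ?_⟩
    have hG' : G ∈ {H | H ∈ Γ ∧ S ⊆ H} := ⟨hG, hSH.trans hHG⟩
    exact (Finset.eq_of_subset_of_card_le hHG
      (hmax hG' (Finset.card_le_card hHG))).symm ▸ rfl
  have : H = Fc := huniq H ⟨hHfac, hES.trans hSH⟩
  exact this ▸ hSH

end ChordalPaper

end Final

section Main

namespace ChordalPaper

open scoped Classical

lemma stmt19_aux {n : ℕ} (K : Type) [Field K] (Γ : Set (Finset (Fin n)))
    (hΓ : IsComplex Γ) (E : Finset (Fin n)) (hE : IsFreeFace Γ E) (i : ℕ)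
    (hi₁ : IsFacet Γ E → E.card ≤ i) :
    Nonempty
      ((LinearMap.ker (bdry K (collapseFace Γ E) i) ⧸
          Submodule.comap (LinearMap.ker (bdry K (collapseFace Γ E) i)).subtype
            (LinearMap.range (bdry K (collapseFace Γ E) (i + 1)))) ≃ₗ[K]
       (LinearMap.ker (bdry K Γ i) ⧸
          Submodule.comap (LinearMap.ker (bdry K Γ i)).subtype
            (LinearMap.range (bdry K Γ (i + 1))))) := by
  obtain ⟨hEΓ, Fc, ⟨hFfac, hEFc⟩, hFuniq⟩ := hE
  have hsub : ∀ S ∈ Γ, E ⊆ S → S ⊆ Fc := subset_facet hFfac hFuniq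
  by_cases hfac : IsFacet Γ E
  · -- facet case : E itself is the unique facet containing it
    have hie : E.card ≤ i := hi₁ hfac
    have hvan : ∀ (m : ℕ), i + 1 ≤ m →
        ∀ (x : {F : Finset (Fin n) // F ∈ Γ ∧ F.card = m} → K) (S : Finset (Fin n)),
          E ⊆ S → ex K Γ m x S = 0 := by
      intro m hm x S hES
      refine ex_of_not_mem' K Γ (fun hS => ?_) x
      have hSE : S = E := hfac.2 S hS.1 hES
      rw [hSE] at hS
      omega
    exact homology_retract (bdry K (collapseFace Γ E) (i+1)) (bdry K (collapseFace Γ E) i)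
      (bdry K Γ (i+1)) (bdry K Γ i)
      (extMap K Γ E (i+1+1)) (extMap K Γ E (i+1)) (extMap K Γ E i)
      (resMap K Γ E (i+1+1)) (resMap K Γ E (i+1)) (resMap K Γ E i) 0
      (LinearMap.ext fun x => funext fun G => bdry_ext K (i+1) x G)
      (LinearMap.ext fun x => funext fun G => bdry_ext K i x G)
      (LinearMap.ext fun x => funext fun G =>
        bdry_res K (i+1) x (fun S hS => hvan (i+1+1) (by omega) x S hS) G)
      (LinearMap.ext fun x => funext fun G =>
        bdry_res K i x (fun S hS => hvan (i+1) (by omega) x S hS) G)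
      (fun x => res_ext K (i+1) x)
      (fun x hx => by
        rw [LinearMap.zero_apply, map_zero, sub_zero]
        exact ext_res K (i+1) x (fun S hS => hvan (i+1) (by omega) x S hS))
  · -- non-facet case
    have hEFne : E ≠ Fc := fun h => hfac (h ▸ hFfac)
    obtain ⟨v₀, hv₀F, hv₀E⟩ := Finset.exists_of_ssubset (hEFc.ssubset_of_ne hEFne)
    have hvanr : ∀ (k : ℕ) (x : {F : Finset (Fin n) // F ∈ Γ ∧ F.card = k + 1} → K)
        (S : Finset (Fin n)), E ⊆ S →
        ex K Γ (k+1) (x - bdry K Γ (k+1) (coneMap K Γ E v₀ hΓ (k+1) x)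
          - coneMap K Γ E v₀ hΓ k (bdry K Γ k x)) S = 0 := by
      intro k x S hES
      rw [ex_sub, ex_sub]
      have hci := cone_identity K hΓ hFfac.1 hsub hv₀F hv₀E k x S hES
      linear_combination -hci
    refine homology_retract (bdry K (collapseFace Γ E) (i+1)) (bdry K (collapseFace Γ E) i)
      (bdry K Γ (i+1)) (bdry K Γ i)
      (extMap K Γ E (i+1+1)) (extMap K Γ E (i+1)) (extMap K Γ E i)
      (resMap K Γ E (i+1+1) ∘ₗ (LinearMap.id
        - bdry K Γ (i+1+1) ∘ₗ coneMap K Γ E v₀ hΓ (i+1+1)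
        - coneMap K Γ E v₀ hΓ (i+1) ∘ₗ bdry K Γ (i+1)))
      (resMap K Γ E (i+1) ∘ₗ (LinearMap.id
        - bdry K Γ (i+1) ∘ₗ coneMap K Γ E v₀ hΓ (i+1)
        - coneMap K Γ E v₀ hΓ i ∘ₗ bdry K Γ i))
      (resMap K Γ E i ∘ₗ (LinearMap.id - bdry K Γ i ∘ₗ coneMap K Γ E v₀ hΓ i))
      (coneMap K Γ E v₀ hΓ (i+1))
      (LinearMap.ext fun x => funext fun G => bdry_ext K (i+1) x G)
      (LinearMap.ext fun x => funext fun G => bdry_ext K i x G)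
      ?_ ?_ ?_ ?_
    · -- hg₂
      refine LinearMap.ext fun x => ?_
      simp only [LinearMap.comp_apply, LinearMap.sub_apply, LinearMap.id_apply]
      have key : bdry K Γ (i+1) (x - bdry K Γ (i+1+1) (coneMap K Γ E v₀ hΓ (i+1+1) x)
            - coneMap K Γ E v₀ hΓ (i+1) (bdry K Γ (i+1) x))
          = bdry K Γ (i+1) x
            - bdry K Γ (i+1) (coneMap K Γ E v₀ hΓ (i+1) (bdry K Γ (i+1) x))
            - coneMap K Γ E v₀ hΓ i (bdry K Γ i (bdry K Γ (i+1) x)) := by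
        rw [map_sub, map_sub,
          (funext (bdry_bdry K hΓ (i+1) (coneMap K Γ E v₀ hΓ (i+1+1) x)) :
            bdry K Γ (i+1) (bdry K Γ (i+1+1) (coneMap K Γ E v₀ hΓ (i+1+1) x)) = 0),
          (funext (bdry_bdry K hΓ i x) : bdry K Γ i (bdry K Γ (i+1) x) = 0),
          map_zero, sub_zero, sub_zero]
      funext G
      rw [bdry_res K (i+1) _ (fun S hS => hvanr (i+1) x S hS) G]
      exact congrArg (fun z => resMap K Γ E (i+1) z G) key
    · -- hg₁
      refine LinearMap.ext fun x => ?_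
      simp only [LinearMap.comp_apply, LinearMap.sub_apply, LinearMap.id_apply]
      have key : bdry K Γ i (x - bdry K Γ (i+1) (coneMap K Γ E v₀ hΓ (i+1) x)
            - coneMap K Γ E v₀ hΓ i (bdry K Γ i x))
          = bdry K Γ i x - bdry K Γ i (coneMap K Γ E v₀ hΓ i (bdry K Γ i x)) := by
        rw [map_sub, map_sub,
          (funext (bdry_bdry K hΓ i (coneMap K Γ E v₀ hΓ (i+1) x)) :
            bdry K Γ i (bdry K Γ (i+1) (coneMap K Γ E v₀ hΓ (i+1) x)) = 0),
          sub_zero]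
      funext G
      rw [bdry_res K i _ (fun S hS => hvanr i x S hS) G]
      exact congrArg (fun z => resMap K Γ E i z G) key
    · -- hgf
      intro x
      simp only [LinearMap.comp_apply, LinearMap.sub_apply, LinearMap.id_apply]
      rw [cone_ext K hΓ (i+1) x, map_zero, sub_zero,
        (funext (bdry_ext K i x) : bdry K Γ i (extMap K Γ E (i+1) x)
          = extMap K Γ E i (bdry K (collapseFace Γ E) i x)),
        cone_ext K hΓ i _, sub_zero, res_ext]
    · -- hfg
      intro x hx
      simp only [LinearMap.comp_apply, LinearMap.sub_apply, LinearMap.id_apply]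
      rw [ext_res K (i+1) _ (fun S hS => hvanr i x S hS), hx, map_zero, sub_zero]

end ChordalPaper

end Main

open ChordalPaper in
/-- if `E` is a free face of `Γ`, the reduced simplicial homology of `Γ`
over a field `K` is isomorphic to that of `Γ∖E` (all faces containing `E` removed) in
all degrees `i > dim E` (i.e. `E.card ≤ i`) when `E` is itself a facet of `Γ`, and in
all degrees `i > 0` otherwise. -/
theorem stmt19 (n : ℕ) (K : Type) [Field K] (Γ : Set (Finset (Fin n)))
    (hΓ : IsComplex Γ) (E : Finset (Fin n)) (hE : IsFreeFace Γ E) (i : ℕ)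
    (hi₁ : IsFacet Γ E → E.card ≤ i) (hi₂ : ¬ IsFacet Γ E → 1 ≤ i) :
    Nonempty (reducedHomology K Γ i ≃ₗ[K] reducedHomology K (collapseFace Γ E) i) := by
  obtain ⟨e⟩ := stmt19_aux K Γ hΓ E hE i hi₁
  exact ⟨e.symm⟩
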